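/- Let V₁ and V₂ be commuting isometries on a complex Hilbert space H, W₁ := ker V₁*, F₂ := P_{W₁}V₂P_{W₁}, and let d₁ : H → H ⊕₂ H, d₁h = (−V₂h, V₁h), and d₂ : H ⊕₂ H → H, d₂(h₁,h₂) = V₁h₁ + V₂h₂. Then ker d₁ = {0}; and the pair (V₁,V₂) is jointly Fredholm if and only if the compression F₂ of V₂ to W₁ is Fredholm, that is: [ran d₂ is closed, dim(ker d₂ ∩ (ran d₁)ᗮ) < ∞, and dim((ran d₂)ᗮ) < ∞] holds if and only if [ran F₂ is closed, dim(ker F₂ ∩ W₁) < ∞, and dim({h ∈ W₁ : F₂*h = 0}) < ∞] holds; and in that case the indices agree: dim(ker F₂ ∩ W₁) − dim({h ∈ W₁ : F₂*h = 0}) = dim(ker d₂ ∩ (ran d₁)ᗮ) − dim((ran d₂)ᗮ). -/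

import Mathlib

set_option maxHeartbeats 1000000


open ContinuousLinearMap
open scoped InnerProductSpace

/-- Let `V₁, V₂` be commuting isometries on a complex Hilbert space `H`,
`W₁ := ker V₁*`, `F₂ := P_{W₁}V₂P_{W₁}`, and let `d₁h = (−V₂h, V₁h)`,
`d₂(h₁,h₂) = V₁h₁ + V₂h₂` be the Koszul boundary maps. Then `ker d₁ = {0}`; the pair
`(V₁,V₂)` is jointly Fredholm iff the Fringe operator `F₂` is Fredholm on `W₁`; and in that
case the indices agree. -/
theorem stmt16 {H : Type*} [NormedAddCommGroup H] [InnerProductSpace ℂ H] [CompleteSpace H]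
    (V₁ V₂ : H →L[ℂ] H)
    (hV₁ : adjoint V₁ ∘L V₁ = 1) (hV₂ : adjoint V₂ ∘L V₂ = 1)
    (hcomm : V₁ ∘L V₂ = V₂ ∘L V₁)
    (F₂ : H →L[ℂ] H)
    (hF₂ : F₂ = (1 - V₁ ∘L adjoint V₁) ∘L (V₂ ∘L (1 - V₁ ∘L adjoint V₁)))
    (d₁ : H →L[ℂ] WithLp 2 (H × H)) (d₂ : WithLp 2 (H × H) →L[ℂ] H)
    (hd₁ : ∀ h : H, d₁ h = (WithLp.equiv 2 (H × H)).symm (-(V₂ h), V₁ h))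
    (hd₂ : ∀ p : WithLp 2 (H × H),
      d₂ p = V₁ (WithLp.equiv 2 (H × H) p).1 + V₂ (WithLp.equiv 2 (H × H) p).2) :
    LinearMap.ker (d₁ : H →ₗ[ℂ] WithLp 2 (H × H)) = ⊥ ∧
    ((IsClosed (LinearMap.range (d₂ : WithLp 2 (H × H) →ₗ[ℂ] H) : Set H) ∧
        FiniteDimensional ℂ ↥(LinearMap.ker (d₂ : WithLp 2 (H × H) →ₗ[ℂ] H) ⊓ (LinearMap.range (d₁ : H →ₗ[ℂ] WithLp 2 (H × H)))ᗮ) ∧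
        FiniteDimensional ℂ ↥((LinearMap.range (d₂ : WithLp 2 (H × H) →ₗ[ℂ] H))ᗮ)) ↔
      (IsClosed (LinearMap.range (F₂ : H →ₗ[ℂ] H) : Set H) ∧
        FiniteDimensional ℂ ↥(LinearMap.ker (F₂ : H →ₗ[ℂ] H) ⊓ LinearMap.ker (adjoint V₁ : H →ₗ[ℂ] H)) ∧
        FiniteDimensional ℂ ↥(LinearMap.ker (adjoint F₂ : H →ₗ[ℂ] H) ⊓ LinearMap.ker (adjoint V₁ : H →ₗ[ℂ] H)))) ∧
    ((IsClosed (LinearMap.range (d₂ : WithLp 2 (H × H) →ₗ[ℂ] H) : Set H) ∧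
        FiniteDimensional ℂ ↥(LinearMap.ker (d₂ : WithLp 2 (H × H) →ₗ[ℂ] H) ⊓ (LinearMap.range (d₁ : H →ₗ[ℂ] WithLp 2 (H × H)))ᗮ) ∧
        FiniteDimensional ℂ ↥((LinearMap.range (d₂ : WithLp 2 (H × H) →ₗ[ℂ] H))ᗮ)) →
      (Module.finrank ℂ ↥(LinearMap.ker (F₂ : H →ₗ[ℂ] H) ⊓ LinearMap.ker (adjoint V₁ : H →ₗ[ℂ] H)) : ℤ) -
          (Module.finrank ℂ ↥(LinearMap.ker (adjoint F₂ : H →ₗ[ℂ] H) ⊓ LinearMap.ker (adjoint V₁ : H →ₗ[ℂ] H)) : ℤ) =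
        (Module.finrank ℂ ↥(LinearMap.ker (d₂ : WithLp 2 (H × H) →ₗ[ℂ] H) ⊓ (LinearMap.range (d₁ : H →ₗ[ℂ] WithLp 2 (H × H)))ᗮ) : ℤ) -
          (Module.finrank ℂ ↥((LinearMap.range (d₂ : WithLp 2 (H × H) →ₗ[ℂ] H))ᗮ) : ℤ)) := by
  -- pointwise consequences of the hypotheses
  have hA1 : ∀ x : H, adjoint V₁ (V₁ x) = x := fun x => by
    have := congrArg (fun T : H →L[ℂ] H => T x) hV₁; simpa using this
  have hA2 : ∀ x : H, adjoint V₂ (V₂ x) = x := fun x => by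
    have := congrArg (fun T : H →L[ℂ] H => T x) hV₂; simpa using this
  have hVc : ∀ z : H, V₁ (V₂ z) = V₂ (V₁ z) := fun z => by
    have := congrArg (fun T : H →L[ℂ] H => T z) hcomm; simpa using this
  have hAc : ∀ x : H, adjoint V₁ (adjoint V₂ x) = adjoint V₂ (adjoint V₁ x) := fun x => by
    have h := congrArg ContinuousLinearMap.adjoint hcomm
    rw [adjoint_comp, adjoint_comp] at h
    have := congrArg (fun T : H →L[ℂ] H => T x) h
    simpa using this.symm
  -- the fringe operator, pointwise
  have hFgen : ∀ y : H, F₂ y = V₂ y - V₁ (adjoint V₁ (V₂ y)) := fun y => by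
    simp only [hF₂, comp_apply, sub_apply, ContinuousLinearMap.one_apply, map_sub, ← hVc, hA1]
    abel
  have hF2W : ∀ y : H, adjoint V₁ (F₂ y) = 0 := fun y => by
    simp [hFgen, map_sub, hA1]
  have hQ : ContinuousLinearMap.adjoint (1 - V₁ ∘L ContinuousLinearMap.adjoint V₁)
      = 1 - V₁ ∘L ContinuousLinearMap.adjoint V₁ := by
    simp [map_sub, adjoint_comp, adjoint_adjoint, ContinuousLinearMap.one_def, adjoint_id]
  have hadjF : ∀ x : H, adjoint F₂ x
      = (1 - V₁ ∘L adjoint V₁) (adjoint V₂ ((1 - V₁ ∘L adjoint V₁) x)) := fun x => by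
    rw [hF₂, adjoint_comp, adjoint_comp, hQ]
    simp only [comp_apply, sub_apply, one_apply, map_sub]
  have hFadj : ∀ x : H, adjoint V₁ x = 0 → adjoint F₂ x = adjoint V₂ x := fun x hx => by
    rw [hadjF x]
    simp [sub_apply, comp_apply, one_apply, hx, hAc]
  -- inner product computations
  have hinner1 : ∀ (h : H) (p : WithLp 2 (H × H)),
      ⟪d₁ h, p⟫_ℂ = ⟪h, adjoint V₁ p.snd - adjoint V₂ p.fst⟫_ℂ := fun h p => by
    rw [hd₁ h, WithLp.prod_inner_apply]
    simp only [WithLp.equiv_symm_apply, WithLp.ofLp_fst, WithLp.ofLp_snd, WithLp.toLp_fst, WithLp.toLp_snd, inner_neg_left, inner_sub_right,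
      adjoint_inner_right]
    ring
  have hinner2 : ∀ (p : WithLp 2 (H × H)) (x : H),
      ⟪d₂ p, x⟫_ℂ = ⟪p.fst, adjoint V₁ x⟫_ℂ + ⟪p.snd, adjoint V₂ x⟫_ℂ := fun p x => by
    rw [hd₂ p, inner_add_left, adjoint_inner_right, adjoint_inner_right]
    rfl
  have hd₂' : ∀ a b : H, d₂ ((WithLp.equiv 2 (H × H)).symm (a, b)) = V₁ a + V₂ b := fun a b => by
    rw [hd₂, Equiv.apply_symm_apply]
  -- characterization of (range d₁)ᗮ
  have hd1orth : ∀ p : WithLp 2 (H × H),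
      p ∈ (LinearMap.range (d₁ : H →ₗ[ℂ] WithLp 2 (H × H)))ᗮ ↔ adjoint V₁ p.snd = adjoint V₂ p.fst := fun p => by
    rw [Submodule.mem_orthogonal]
    constructor
    · intro hp
      have := hp (d₁ (adjoint V₁ p.snd - adjoint V₂ p.fst)) ⟨_, rfl⟩
      rwa [hinner1, inner_self_eq_zero, sub_eq_zero] at this
    · intro hp u hu
      obtain ⟨h, rfl⟩ := hu
      rw [ContinuousLinearMap.coe_coe, hinner1, hp, sub_self, inner_zero_right]
  -- characterization of (range d₂)ᗮ
  have hd2orth : ∀ x : H,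
      x ∈ (LinearMap.range (d₂ : WithLp 2 (H × H) →ₗ[ℂ] H))ᗮ ↔ (adjoint V₁ x = 0 ∧ adjoint V₂ x = 0) := fun x => by
    rw [Submodule.mem_orthogonal]
    constructor
    · intro hx
      constructor
      · have := hx (d₂ ((WithLp.equiv 2 (H × H)).symm (adjoint V₁ x, 0))) ⟨_, rfl⟩
        rw [hinner2] at this
        simp only [WithLp.equiv_symm_apply, WithLp.ofLp_fst, WithLp.ofLp_snd, WithLp.toLp_fst, WithLp.toLp_snd, inner_zero_left, add_zero] at this
        rwa [inner_self_eq_zero] at this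
      · have := hx (d₂ ((WithLp.equiv 2 (H × H)).symm (0, adjoint V₂ x))) ⟨_, rfl⟩
        rw [hinner2] at this
        simp only [WithLp.equiv_symm_apply, WithLp.ofLp_fst, WithLp.ofLp_snd, WithLp.toLp_fst, WithLp.toLp_snd, inner_zero_left, zero_add] at this
        rwa [inner_self_eq_zero] at this
    · rintro ⟨h1, h2⟩ u ⟨p, rfl⟩
      rw [ContinuousLinearMap.coe_coe, hinner2, h1, h2, inner_zero_right, inner_zero_right, add_zero]
  -- the map G : w ↦ (−V₁*V₂ w, w)
  set G : H →ₗ[ℂ] WithLp 2 (H × H) :=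
    (WithLp.linearEquiv 2 ℂ (H × H)).symm.toLinearMap ∘ₗ
      (LinearMap.prod (-((adjoint V₁ ∘L V₂ : H →L[ℂ] H) : H →ₗ[ℂ] H)) LinearMap.id) with hGdef
  have hG : ∀ w : H, G w = (WithLp.equiv 2 (H × H)).symm (-(adjoint V₁ (V₂ w)), w) := fun w => rfl
  have hGinj : Function.Injective G := fun a b hab => by
    have := congrArg (fun q : WithLp 2 (H × H) => q.snd) hab
    exact this
  have hmap : Submodule.map G (LinearMap.ker (F₂ : H →ₗ[ℂ] H) ⊓ LinearMap.ker (adjoint V₁ : H →ₗ[ℂ] H))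
      = LinearMap.ker (d₂ : WithLp 2 (H × H) →ₗ[ℂ] H) ⊓ (LinearMap.range (d₁ : H →ₗ[ℂ] WithLp 2 (H × H)))ᗮ := by
    ext p
    simp only [Submodule.mem_map, Submodule.mem_inf, LinearMap.mem_ker, ContinuousLinearMap.coe_coe]
    constructor
    · rintro ⟨w, ⟨hw1, hw2⟩, rfl⟩
      constructor
      · have hb : V₂ w = V₁ (adjoint V₁ (V₂ w)) := sub_eq_zero.mp (by rw [← hFgen, hw1])
        rw [hG, hd₂', map_neg, ← hb, neg_add_cancel]
      · rw [hd1orth]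
        show adjoint V₁ w = adjoint V₂ (-(adjoint V₁ (V₂ w)))
        rw [hw2, map_neg, ← hAc, hA2, hw2, neg_zero]
    · rintro ⟨hker, horth⟩
      rw [hd1orth] at horth
      have h0 : V₁ p.fst + V₂ p.snd = 0 := by
        have h0' := hd₂ p
        rw [hker] at h0'
        exact h0'.symm
      have ha : p.fst = -(adjoint V₁ (V₂ p.snd)) := by
        have h1 := congrArg (fun z => adjoint V₁ z) h0
        simp only [map_add, hA1, map_zero] at h1
        exact eq_neg_of_add_eq_zero_left h1
      have hb2 : adjoint V₁ p.snd = 0 := by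
        have h2 : adjoint V₁ p.snd = -(adjoint V₁ p.snd) := by
          nth_rewrite 1 [horth]
          rw [ha, map_neg, ← hAc, hA2]
        have h4 : (2 : ℂ) • adjoint V₁ p.snd = 0 := by
          rw [two_smul]
          nth_rewrite 2 [h2]
          exact add_neg_cancel _
        exact (smul_eq_zero.mp h4).resolve_left (by norm_num)
      have hFb : F₂ p.snd = 0 := by
        have ha' : adjoint V₁ (V₂ p.snd) = -p.fst := by rw [ha, neg_neg]
        rw [hFgen, ha', map_neg, sub_neg_eq_add, add_comm]
        exact h0
      refine ⟨p.snd, ⟨hFb, hb2⟩, ?_⟩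
      have hGp : G p.snd = (WithLp.equiv 2 (H × H)).symm (p.fst, p.snd) := by
        rw [hG, ← ha]
      exact hGp.trans rfl
  have eK : (↥(LinearMap.ker (F₂ : H →ₗ[ℂ] H) ⊓ LinearMap.ker (adjoint V₁ : H →ₗ[ℂ] H)))
      ≃ₗ[ℂ] ↥(LinearMap.ker (d₂ : WithLp 2 (H × H) →ₗ[ℂ] H) ⊓ (LinearMap.range (d₁ : H →ₗ[ℂ] WithLp 2 (H × H)))ᗮ) :=
    (Submodule.equivMapOfInjective G hGinj _).trans (LinearEquiv.ofEq _ _ hmap)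
  -- cokernel equality
  have horth2 : (LinearMap.range (d₂ : WithLp 2 (H × H) →ₗ[ℂ] H))ᗮ
      = LinearMap.ker (adjoint F₂ : H →ₗ[ℂ] H) ⊓ LinearMap.ker (adjoint V₁ : H →ₗ[ℂ] H) := by
    ext x
    rw [hd2orth x, Submodule.mem_inf, LinearMap.mem_ker, LinearMap.mem_ker, ContinuousLinearMap.coe_coe, ContinuousLinearMap.coe_coe]
    constructor
    · rintro ⟨h1, h2⟩
      exact ⟨by rw [hFadj x h1, h2], h1⟩
    · rintro ⟨hf, h1⟩
      refine ⟨h1, ?_⟩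
      rw [← hFadj x h1]
      exact hf
  -- range comparison
  have hrange : (LinearMap.range (d₂ : WithLp 2 (H × H) →ₗ[ℂ] H) : Set H)
      = (fun z => z - V₁ (adjoint V₁ z)) ⁻¹' (LinearMap.range (F₂ : H →ₗ[ℂ] H) : Set H) := by
    ext x
    simp only [Set.mem_preimage, SetLike.mem_coe, LinearMap.mem_range, ContinuousLinearMap.coe_coe]
    constructor
    · rintro ⟨p, rfl⟩
      refine ⟨(WithLp.equiv 2 (H × H) p).2, ?_⟩
      rw [hd₂ p, hFgen]
      simp only [map_add, hA1]
      abel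
    · rintro ⟨y, hy⟩
      refine ⟨(WithLp.equiv 2 (H × H)).symm (adjoint V₁ x - adjoint V₁ (V₂ y), y), ?_⟩
      rw [hd₂', map_sub]
      have key : V₂ y - V₁ (adjoint V₁ (V₂ y)) = x - V₁ (adjoint V₁ x) := by
        rw [← hFgen, hy]
      have hx : V₁ (adjoint V₁ x) + (V₂ y - V₁ (adjoint V₁ (V₂ y))) = x := by
        rw [key]; abel
      conv_rhs => rw [← hx]
      abel
  -- closedness of ranges
  have hCl : IsClosed (LinearMap.range (d₂ : WithLp 2 (H × H) →ₗ[ℂ] H) : Set H) ↔ IsClosed (LinearMap.range (F₂ : H →ₗ[ℂ] H) : Set H) := by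
    constructor
    · intro hc
      have hset : (LinearMap.range (F₂ : H →ₗ[ℂ] H) : Set H)
          = (LinearMap.range (d₂ : WithLp 2 (H × H) →ₗ[ℂ] H) : Set H) ∩ ((fun z => V₁ (adjoint V₁ z)) ⁻¹' {0}) := by
        ext x
        simp only [Set.mem_inter_iff, Set.mem_preimage, Set.mem_singleton_iff, SetLike.mem_coe,
          LinearMap.mem_range, ContinuousLinearMap.coe_coe]
        constructor
        · rintro ⟨y, rfl⟩
          refine ⟨?_, by rw [hF2W y, map_zero]⟩
          have hmem : F₂ y ∈ (LinearMap.range (d₂ : WithLp 2 (H × H) →ₗ[ℂ] H) : Set H) := by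
            rw [hrange]
            simp only [Set.mem_preimage, SetLike.mem_coe, LinearMap.mem_range, ContinuousLinearMap.coe_coe, hF2W y,
              map_zero, sub_zero]
            exact ⟨y, rfl⟩
          exact LinearMap.mem_range.mp (SetLike.mem_coe.mp hmem)
        · rintro ⟨⟨p, rfl⟩, hx0⟩
          have hmem : d₂ p ∈ ((fun z => z - V₁ (adjoint V₁ z)) ⁻¹' (LinearMap.range (F₂ : H →ₗ[ℂ] H) : Set H)) := by
            rw [← hrange]
            exact ⟨p, rfl⟩
          simp only [Set.mem_preimage, SetLike.mem_coe, LinearMap.mem_range, ContinuousLinearMap.coe_coe] at hmem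
          obtain ⟨y, hy⟩ := hmem
          refine ⟨y, ?_⟩
          rw [hy, hx0, sub_zero]
      rw [hset]
      exact hc.inter (isClosed_singleton.preimage (V₁.continuous.comp (adjoint V₁).continuous))
    · intro hc
      rw [hrange]
      exact hc.preimage (continuous_id.sub (V₁.continuous.comp (adjoint V₁).continuous))
  refine ⟨?_, ⟨?_, ?_⟩, ?_⟩
  · rw [Submodule.eq_bot_iff]
    intro h hh
    rw [LinearMap.mem_ker] at hh
    have h2 : V₁ h = 0 := by
      have := congrArg (fun q : WithLp 2 (H × H) => q.snd) hh
      simpa [hd₁ h] using this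
    rw [← hA1 h, h2, map_zero]
  · rintro ⟨hc, hfd1, hfd2⟩
    refine ⟨hCl.mp hc, ?_, ?_⟩
    · haveI := hfd1
      exact eK.symm.finiteDimensional
    · rw [← horth2]
      exact hfd2
  · rintro ⟨hc, hfd1, hfd2⟩
    refine ⟨hCl.mpr hc, ?_, ?_⟩
    · haveI := hfd1
      exact eK.finiteDimensional
    · rw [horth2]
      exact hfd2
  · rintro -
    rw [horth2, eK.finrank_eq]
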